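/- Let H be a complex Hilbert space and let P and Q be orthogonal projections on H (continuous, idempotent, self-adjoint) such that P − Q is of finite rank. Then the subspaces range(P) ∩ ker(Q) and range(Q) ∩ ker(P) are finite-dimensional and Tr(P − Q) = dim(range(P) ∩ ker(Q)) − dim(range(Q) ∩ ker(P)); in particular Tr(P − Q) is an integer and equals the Fredholm index of the restriction of Q mapping range(P) to range(Q). -/

import Mathlib

open LinearMap Submodule Module

private lemma core {V : Type*} [NormedAddCommGroup V] [InnerProductSpace ℂ V] [FiniteDimensional ℂ V]
    (S B : Module.End ℂ V) (hS : S.IsSymmetric) (hB : B.IsSymmetric)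
    (hanti : B * S = -(S * B)) (hsq : B * B = 1 - S * S) :
    LinearMap.trace ℂ V S =
      (Module.finrank ℂ (LinearMap.ker (S - 1)) : ℂ) -
        (Module.finrank ℂ (LinearMap.ker (S + 1)) : ℂ) := by
  classical
  set E := LinearMap.ker (S - 1) with hE
  set F := LinearMap.ker (S + 1) with hF
  have memE : ∀ x, x ∈ E ↔ S x = x := by
    intro x; simp [hE, LinearMap.mem_ker, sub_eq_zero]
  have memF : ∀ x, x ∈ F ↔ S x = -x := by
    intro x
    constructor
    · intro hx
      have : S x + x = 0 := by simpa [hF, LinearMap.mem_ker] using hx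
      linear_combination (norm := module) this
    · intro hx
      simp [hF, LinearMap.mem_ker, hx]
  set G := E ⊔ F with hG
  set U := Gᗮ with hU
  -- orthogonality facts
  have hEF : E ⟂ F := by
    intro x hx
    rw [Submodule.mem_orthogonal]
    intro u hu
    have hx' : S x = x := (memE x).mp hx
    have hu' : S u = -u := (memF u).mp hu
    have h1 : inner ℂ (S u) x = inner ℂ u (S x) := hS u x
    rw [hu', hx', inner_neg_left] at h1
    have : (2 : ℂ) * inner ℂ u x = 0 := by linear_combination -h1
    simpa using this
  have hEU : E ⟂ U := (Submodule.isOrtho_orthogonal_right G).mono_left le_sup_left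
  have hFU : F ⟂ U := (Submodule.isOrtho_orthogonal_right G).mono_left le_sup_right
  set N : Fin 3 → Submodule ℂ V := ![E, F, U] with hN
  have hof : OrthogonalFamily ℂ (fun i => N i) (fun i => (N i).subtypeₗᵢ) := by
    apply orthogonalFamily_iff_pairwise.mpr
    intro i j hij
    fin_cases i <;> fin_cases j <;>
      first
        | exact absurd rfl hij
        | simpa [hN, Function.onFun] using hEF
        | simpa [hN, Function.onFun] using hEF.symm
        | simpa [hN, Function.onFun] using hEU
        | simpa [hN, Function.onFun] using hEU.symm
        | simpa [hN, Function.onFun] using hFU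
        | simpa [hN, Function.onFun] using hFU.symm
  have hsup : iSup N = ⊤ := by
    apply top_unique
    rw [← Submodule.sup_orthogonal_of_hasOrthogonalProjection (K := G)]
    apply sup_le
    · exact le_trans (sup_le (le_iSup N 0) (le_iSup N 1)) le_rfl
    · exact le_iSup N 2
  have hinternal : DirectSum.IsInternal N := by
    rw [hof.isInternal_iff, hsup, Submodule.top_orthogonal_eq_bot]
  -- S maps each piece to itself
  have hSE : ∀ x ∈ E, S x ∈ E := by
    intro x hx; rw [memE] at hx ⊢; exact congrArg S hx
  have hSF : ∀ x ∈ F, S x ∈ F := by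
    intro x hx; rw [memF] at hx ⊢; rw [hx, map_neg, hx]
  have hSG : ∀ x ∈ G, S x ∈ G := by
    intro x hx
    rcases Submodule.mem_sup.mp hx with ⟨a, ha, b, hb, rfl⟩
    rw [map_add]
    exact Submodule.add_mem_sup (hSE a ha) (hSF b hb)
  have hSU : ∀ x ∈ U, S x ∈ U := by
    intro x hx
    rw [hU, Submodule.mem_orthogonal] at hx ⊢
    intro u hu
    rw [← hS u x]
    exact hx (S u) (hSG u hu)
  have hSN : ∀ i, Set.MapsTo S (N i) (N i) := by
    intro i
    fin_cases i
    · exact hSE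
    · exact hSF
    · exact hSU
  rw [LinearMap.trace_eq_sum_trace_restrict hinternal hSN, Fin.sum_univ_three]
  -- traces on the pieces
  have t0 : LinearMap.trace ℂ (N 0) (S.restrict (hSN 0)) = (finrank ℂ E : ℂ) := by
    have : S.restrict (hSN 0) = LinearMap.id := by
      ext ⟨x, hx⟩
      exact (memE x).mp hx
    rw [this, LinearMap.trace_id]
    congr 1
  have t1 : LinearMap.trace ℂ (N 1) (S.restrict (hSN 1)) = -(finrank ℂ F : ℂ) := by
    have : S.restrict (hSN 1) = -LinearMap.id := by
      ext ⟨x, hx⟩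
      exact (memF x).mp hx
    rw [this, map_neg, LinearMap.trace_id]
    rfl
  -- trace on U is zero via conjugation by B
  have hBE : ∀ x ∈ E, B x ∈ F := by
    intro x hx
    rw [memE] at hx; rw [memF]
    have := congrFun (congrArg DFunLike.coe hanti) x
    simp only [Module.End.mul_apply, LinearMap.neg_apply] at this
    rw [hx] at this
    linear_combination (norm := module) this
  have hBF : ∀ x ∈ F, B x ∈ E := by
    intro x hx
    rw [memF] at hx; rw [memE]
    have := congrFun (congrArg DFunLike.coe hanti) x
    simp only [Module.End.mul_apply, LinearMap.neg_apply] at this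
    rw [hx, map_neg] at this
    linear_combination (norm := module) this
  have hBG : ∀ x ∈ G, B x ∈ G := by
    intro x hx
    rcases Submodule.mem_sup.mp hx with ⟨a, ha, b, hb, rfl⟩
    rw [map_add]
    exact add_mem (Submodule.mem_sup_right (hBE a ha)) (Submodule.mem_sup_left (hBF b hb))
  have hBU : ∀ x ∈ U, B x ∈ U := by
    intro x hx
    rw [hU, Submodule.mem_orthogonal] at hx ⊢
    intro u hu
    rw [← hB u x]
    exact hx (B u) (hBG u hu)
  have t2 : LinearMap.trace ℂ (N 2) (S.restrict (hSN 2)) = 0 := by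
    set S' := S.restrict (hSN 2) with hS'
    have hBU' : ∀ x ∈ (N 2 : Submodule ℂ V), B x ∈ (N 2 : Submodule ℂ V) := hBU
    set B' := B.restrict hBU' with hB'
    -- B' is injective
    have hinj : Function.Injective B' := by
      rw [← LinearMap.ker_eq_bot]
      rw [Submodule.eq_bot_iff]
      rintro ⟨x, hx⟩ hker
      have hBx : B x = 0 := congrArg Subtype.val hker
      have hBBx : (B * B) x = 0 := by simp [Module.End.mul_apply, hBx]
      rw [hsq] at hBBx
      have hSSx : S (S x) = x := by
        have : x - S (S x) = 0 := by simpa [Module.End.mul_apply, sub_eq_zero] using hBBx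
        linear_combination (norm := module) - this
      -- x lies in G
      have hxG : x ∈ G := by
        have hu : (2⁻¹ : ℂ) • (x + S x) ∈ E := by
          rw [memE, map_smul, map_add, hSSx]
          rw [smul_add, smul_add]
          module
        have hv : (2⁻¹ : ℂ) • (x - S x) ∈ F := by
          rw [memF, map_smul, map_sub, hSSx]
          module
        have : x = (2⁻¹ : ℂ) • (x + S x) + (2⁻¹ : ℂ) • (x - S x) := by module
        rw [this]
        exact Submodule.add_mem_sup hu hv
      have hxU : x ∈ Gᗮ := hx
      have : inner ℂ x x = 0 := (Submodule.mem_orthogonal G x).mp hxU x hxG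
      have : x = 0 := by rwa [inner_self_eq_zero] at this
      exact Subtype.ext this
    have hbij : Function.Bijective B' :=
      ⟨hinj, (LinearMap.injective_iff_surjective).mp hinj⟩
    set e : (N 2) ≃ₗ[ℂ] (N 2) := LinearEquiv.ofBijective B' hbij with he
    have hconj : e.conj S' = -S' := by
      ext x
      have h1 : e.conj S' x = B' (S' (e.symm x)) := rfl
      rw [h1]
      have hcomm : B' (S' (e.symm x)) = -(S' (B' (e.symm x))) := by
        apply Subtype.ext
        have := congrFun (congrArg DFunLike.coe hanti) ((e.symm x : N 2) : V)
        simp only [Module.End.mul_apply, LinearMap.neg_apply] at this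
        exact this
      rw [hcomm]
      have : B' (e.symm x) = x := e.apply_symm_apply x
      rw [this]
      rfl
    have := LinearMap.trace_conj' S' e
    rw [hconj, map_neg] at this
    have h2 : (2 : ℂ) * LinearMap.trace ℂ (N 2) S' = 0 := by linear_combination - this
    simpa using h2
  rw [t0, t1, t2]
  ring

private lemma range_inf_ker_eq {H : Type*} [NormedAddCommGroup H] [InnerProductSpace ℂ H]
    [CompleteSpace H] (P Q : H →L[ℂ] H)
    (hPidem : P.comp P = P) (hQidem : Q.comp Q = Q)
    (hPsa : IsSelfAdjoint P) (hQsa : IsSelfAdjoint Q) :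
    LinearMap.range (P : H →ₗ[ℂ] H) ⊓ LinearMap.ker (Q : H →ₗ[ℂ] H)
      = LinearMap.ker (((P - Q : H →L[ℂ] H) : H →ₗ[ℂ] H) - 1) := by
  have hPP : ∀ y, P (P y) = P y := fun y => congrFun (congrArg DFunLike.coe hPidem) y
  have hQQ : ∀ y, Q (Q y) = Q y := fun y => congrFun (congrArg DFunLike.coe hQidem) y
  ext x
  simp only [Submodule.mem_inf, LinearMap.mem_ker, LinearMap.sub_apply, Module.End.one_apply,
    sub_eq_zero, ContinuousLinearMap.coe_coe, ContinuousLinearMap.coe_sub,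
    ContinuousLinearMap.sub_apply, LinearMap.mem_range]
  constructor
  · rintro ⟨⟨y, rfl⟩, hQx⟩
    rw [hQx, hPP y, sub_zero]
  · intro h
    have hP1 : inner ℂ (P x) x = (‖P x‖ : ℂ) ^ 2 := by
      calc inner ℂ (P x) x = inner ℂ (P (P x)) x := by rw [hPP x]
        _ = inner ℂ (P x) (P x) := hPsa.isSymmetric (P x) x
        _ = (‖P x‖ : ℂ) ^ 2 := inner_self_eq_norm_sq_to_K (P x)
    have hQ1 : inner ℂ (Q x) x = (‖Q x‖ : ℂ) ^ 2 := by
      calc inner ℂ (Q x) x = inner ℂ (Q (Q x)) x := by rw [hQQ x]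
        _ = inner ℂ (Q x) (Q x) := hQsa.isSymmetric (Q x) x
        _ = (‖Q x‖ : ℂ) ^ 2 := inner_self_eq_norm_sq_to_K (Q x)
    have heq : inner ℂ (P x) x - inner ℂ (Q x) x = inner ℂ x x := by
      rw [← inner_sub_left, h]
    rw [hP1, hQ1, inner_self_eq_norm_sq_to_K] at heq
    have heqR : ‖P x‖ ^ 2 - ‖Q x‖ ^ 2 = ‖x‖ ^ 2 := by
      have := congrArg Complex.re heq
      simpa [← Complex.ofReal_pow] using this
    have hcs : ‖P x‖ ^ 2 ≤ ‖P x‖ * ‖x‖ := by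
      have h1 : ‖inner ℂ (P x) x‖ ≤ ‖P x‖ * ‖x‖ := norm_inner_le_norm (P x) x
      rw [hP1] at h1
      calc ‖P x‖ ^ 2 = ‖((‖P x‖ : ℂ)) ^ 2‖ := by
            rw [norm_pow, Complex.norm_real, Real.norm_eq_abs, abs_norm]
        _ ≤ ‖P x‖ * ‖x‖ := h1
    have hQ0 : ‖Q x‖ = 0 := by
      nlinarith [norm_nonneg (Q x), norm_nonneg (P x), norm_nonneg x,
        sq_nonneg (‖P x‖ - ‖x‖)]
    have hQx : Q x = 0 := norm_eq_zero.mp hQ0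
    have hPx : P x = x := by rw [hQx, sub_zero] at h; exact h
    exact ⟨⟨x, hPx⟩, hQx⟩

/-- A continuous linear map is of finite rank if its range is finite dimensional. -/
def FiniteRank {V W : Type*} [NormedAddCommGroup V] [NormedSpace ℂ V]
    [NormedAddCommGroup W] [NormedSpace ℂ W] (T : V →L[ℂ] W) : Prop :=
  FiniteDimensional ℂ (LinearMap.range (T : V →ₗ[ℂ] W))

/-- The trace of a (finite-rank) continuous operator `T`, defined as the trace of the
endomorphism induced by `T` on the subspace `range T`. -/
noncomputable def fTrace {V : Type*} [NormedAddCommGroup V] [NormedSpace ℂ V]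
    (T : V →L[ℂ] V) : ℂ :=
  LinearMap.trace ℂ (LinearMap.range (T : V →ₗ[ℂ] V))
    ((T : V →ₗ[ℂ] V).restrict
      (p := LinearMap.range (T : V →ₗ[ℂ] V)) (q := LinearMap.range (T : V →ₗ[ℂ] V))
      (fun x _hx => ⟨x, rfl⟩))

theorem stmt14 {H : Type*} [NormedAddCommGroup H] [InnerProductSpace ℂ H] [CompleteSpace H]
    (P Q : H →L[ℂ] H)
    (hPidem : P.comp P = P) (hQidem : Q.comp Q = Q)
    (hPsa : IsSelfAdjoint P) (hQsa : IsSelfAdjoint Q)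
    (hfr : FiniteRank (P - Q)) :
    FiniteDimensional ℂ
        (LinearMap.range (P : H →ₗ[ℂ] H) ⊓ LinearMap.ker (Q : H →ₗ[ℂ] H) : Submodule ℂ H) ∧
    FiniteDimensional ℂ
        (LinearMap.range (Q : H →ₗ[ℂ] H) ⊓ LinearMap.ker (P : H →ₗ[ℂ] H) : Submodule ℂ H) ∧
    fTrace (P - Q) =
      (Module.finrank ℂ
          (LinearMap.range (P : H →ₗ[ℂ] H) ⊓ LinearMap.ker (Q : H →ₗ[ℂ] H) : Submodule ℂ H) : ℂ) -
        (Module.finrank ℂ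
          (LinearMap.range (Q : H →ₗ[ℂ] H) ⊓ LinearMap.ker (P : H →ₗ[ℂ] H) : Submodule ℂ H) : ℂ) := by
  have hPP : P * P = P := hPidem
  have hQQ : Q * Q = Q := hQidem
  set T : H →L[ℂ] H := P - Q with hT
  set Tl : H →ₗ[ℂ] H := (T : H →ₗ[ℂ] H) with hTl
  set V : Submodule ℂ H := LinearMap.range Tl with hV
  have hfd : FiniteDimensional ℂ V := hfr
  set A : H →L[ℂ] H := 1 - P - Q with hA
  have hanti : A * T = -(T * A) := by
    rw [hA, hT]
    simp only [sub_mul, mul_sub, one_mul, mul_one, hPP, hQQ]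
    abel
  have hsq : A * A = 1 - T * T := by
    rw [hA, hT]
    simp only [sub_mul, mul_sub, one_mul, mul_one, hPP, hQQ]
    abel
  have hTmem : ∀ x ∈ V, Tl x ∈ V := fun x _ => ⟨x, rfl⟩
  have hAmem : ∀ x ∈ V, (A : H →ₗ[ℂ] H) x ∈ V := by
    rintro _ ⟨y, rfl⟩
    refine ⟨-(A y), ?_⟩
    have := congrFun (congrArg DFunLike.coe hanti) y
    simp only [ContinuousLinearMap.coe_coe, ContinuousLinearMap.mul_apply,
      ContinuousLinearMap.neg_apply] at this ⊢
    rw [hTl]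
    simp only [ContinuousLinearMap.coe_coe]
    rw [map_neg, ← this]
  set S : Module.End ℂ V := Tl.restrict (p := V) (q := V) (fun x _hx => ⟨x, rfl⟩) with hS
  set B : Module.End ℂ V := LinearMap.restrict (A : H →ₗ[ℂ] H) hAmem with hB
  have hTsa : IsSelfAdjoint T := hPsa.sub hQsa
  have hAsa : IsSelfAdjoint A := by
    rw [hA]
    exact ((IsSelfAdjoint.one (H →L[ℂ] H)).sub hPsa).sub hQsa
  have hSsym : S.IsSymmetric := by
    intro x y
    rw [Submodule.coe_inner, Submodule.coe_inner]
    exact hTsa.isSymmetric _ _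
  have hBsym : B.IsSymmetric := by
    intro x y
    rw [Submodule.coe_inner, Submodule.coe_inner, LinearMap.restrict_coe_apply,
      LinearMap.restrict_coe_apply]
    exact hAsa.isSymmetric _ _
  have hanti' : B * S = -(S * B) := by
    ext x
    have := congrFun (congrArg DFunLike.coe hanti) (x : H)
    simp only [ContinuousLinearMap.mul_apply, ContinuousLinearMap.neg_apply] at this
    simp only [Module.End.mul_apply, LinearMap.neg_apply, Submodule.coe_neg,
      LinearMap.restrict_coe_apply, hTl, ContinuousLinearMap.coe_coe]
    exact this
  have hsq' : B * B = 1 - S * S := by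
    ext x
    have := congrFun (congrArg DFunLike.coe hsq) (x : H)
    simp only [ContinuousLinearMap.mul_apply, ContinuousLinearMap.sub_apply,
      ContinuousLinearMap.one_apply] at this
    simp only [Module.End.mul_apply, LinearMap.sub_apply, Module.End.one_apply,
      Submodule.coe_sub, LinearMap.restrict_coe_apply, hTl, ContinuousLinearMap.coe_coe]
    exact this
  -- identify the eigenspaces
  have hEmap : Submodule.map V.subtype (LinearMap.ker (S - 1)) =
      LinearMap.range (P : H →ₗ[ℂ] H) ⊓ LinearMap.ker (Q : H →ₗ[ℂ] H) := by
    rw [range_inf_ker_eq P Q hPidem hQidem hPsa hQsa]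
    ext x
    constructor
    · rintro ⟨⟨y, hy⟩, hk, rfl⟩
      have : S ⟨y, hy⟩ = ⟨y, hy⟩ := by
        have : (S - 1) ⟨y, hy⟩ = 0 := hk
        rwa [LinearMap.sub_apply, Module.End.one_apply, sub_eq_zero] at this
      have hTy : Tl y = y := congrArg Subtype.val this
      simp only [Submodule.coe_subtype, LinearMap.mem_ker, LinearMap.sub_apply,
        Module.End.one_apply, sub_eq_zero]
      exact hTy
    · intro hx
      have hTx : Tl x = x := by
        have : (Tl - 1) x = 0 := hx
        rwa [LinearMap.sub_apply, Module.End.one_apply, sub_eq_zero] at this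
      have hxV : x ∈ V := ⟨x, hTx⟩
      refine ⟨⟨x, hxV⟩, ?_, rfl⟩
      show (S - 1) ⟨x, hxV⟩ = 0
      rw [LinearMap.sub_apply, Module.End.one_apply, sub_eq_zero]
      exact Subtype.ext hTx
  have hFmap : Submodule.map V.subtype (LinearMap.ker (S + 1)) =
      LinearMap.range (Q : H →ₗ[ℂ] H) ⊓ LinearMap.ker (P : H →ₗ[ℂ] H) := by
    rw [range_inf_ker_eq Q P hQidem hPidem hQsa hPsa]
    have hQP : ∀ x : H, ((Q - P : H →L[ℂ] H) : H →ₗ[ℂ] H) x = -(Tl x) := by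
      intro x
      simp only [hTl, hT, ContinuousLinearMap.coe_coe, ContinuousLinearMap.sub_apply]
      abel
    ext x
    constructor
    · rintro ⟨⟨y, hy⟩, hk, rfl⟩
      have : S ⟨y, hy⟩ = -⟨y, hy⟩ := by
        have h0 : (S + 1) ⟨y, hy⟩ = 0 := hk
        rw [LinearMap.add_apply, Module.End.one_apply, add_eq_zero_iff_eq_neg] at h0
        exact h0
      have hTy : Tl y = -y := congrArg Subtype.val this
      simp only [Submodule.coe_subtype, LinearMap.mem_ker, LinearMap.sub_apply,
        Module.End.one_apply, sub_eq_zero, hQP y, hTy, neg_neg]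
    · intro hx
      have hTx : Tl x = -x := by
        have : ((Q - P : H →L[ℂ] H) : H →ₗ[ℂ] H) x - x = 0 := hx
        rw [hQP x] at this
        linear_combination (norm := module) - this
      have hxV : x ∈ V := ⟨-x, by rw [map_neg, hTx, neg_neg]⟩
      refine ⟨⟨x, hxV⟩, ?_, rfl⟩
      show (S + 1) ⟨x, hxV⟩ = 0
      rw [LinearMap.add_apply, Module.End.one_apply, add_eq_zero_iff_eq_neg]
      exact Subtype.ext hTx
  have eE : (LinearMap.ker (S - 1)) ≃ₗ[ℂ]
      (LinearMap.range (P : H →ₗ[ℂ] H) ⊓ LinearMap.ker (Q : H →ₗ[ℂ] H) : Submodule ℂ H) :=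
    (Submodule.equivMapOfInjective V.subtype (Submodule.injective_subtype V)
      (LinearMap.ker (S - 1))).trans (LinearEquiv.ofEq _ _ hEmap)
  have eF : (LinearMap.ker (S + 1)) ≃ₗ[ℂ]
      (LinearMap.range (Q : H →ₗ[ℂ] H) ⊓ LinearMap.ker (P : H →ₗ[ℂ] H) : Submodule ℂ H) :=
    (Submodule.equivMapOfInjective V.subtype (Submodule.injective_subtype V)
      (LinearMap.ker (S + 1))).trans (LinearEquiv.ofEq _ _ hFmap)
  refine ⟨Module.Finite.equiv eE, Module.Finite.equiv eF, ?_⟩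
  have htr : fTrace T = LinearMap.trace ℂ V S := rfl
  rw [htr, core S B hSsym hBsym hanti' hsq', eE.finrank_eq, eF.finrank_eq]
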